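/- Let m ≥ 0 and n ≥ 1 be integers, let l_1, …, l_m be integers with l_j ≥ 2, let ν_1, …, ν_n be real numbers with ν_r ≥ 0, and set a_k = [∏_{j=1}^m (l_j)_k] / [(k!)^{m+n} · ∏_{r=1}^n (ν_r + 1)_k]. Then lim_{k→∞} (−log a_k) / (k log k) = 2n; consequently the order of the entire function f(z) = Σ_{k=0}^∞ a_k z^k, given by ρ(f) = limsup_{k→∞} (k log k) / (−log a_k), equals 1/(2n). -/

import Mathlib

/-- The rising factorial (Pochhammer symbol) `(a)_k = a(a+1)⋯(a+k-1)`. -/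
noncomputable def risingFac (a : ℝ) (k : ℕ) : ℝ :=
  ∏ j ∈ Finset.range k, (a + j)

open Filter Real

lemma pow_le_exp_mul_factorial : ∀ k : ℕ, ((k : ℝ))^k ≤ Real.exp k * k.factorial := by
  intro k
  induction k with
  | zero => simp
  | succ k ih =>
    have h1 : ((k : ℝ) + 1)^k ≤ Real.exp 1 * (k : ℝ)^k := by
      rcases Nat.eq_zero_or_pos k with hk | hk
      · subst hk; simpa using Real.one_le_exp (zero_le_one)
      · have hk0 : (0:ℝ) < k := by exact_mod_cast hk
        have h2 : ((k : ℝ) + 1) = (k:ℝ) * (1 + 1/k) := by field_simp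
        rw [h2, mul_pow]
        have h3 : (1 + 1/(k:ℝ))^k ≤ Real.exp 1 := by
          have := Real.add_one_le_exp (1/(k:ℝ))
          calc (1 + 1/(k:ℝ))^k ≤ (Real.exp (1/k))^k := by
                apply pow_le_pow_left₀ (by positivity) (by linarith)
            _ = Real.exp 1 := by
                rw [← Real.exp_nat_mul]; congr 1; field_simp
        calc (k:ℝ)^k * (1 + 1/(k:ℝ))^k ≤ (k:ℝ)^k * Real.exp 1 := by
              apply mul_le_mul_of_nonneg_left h3 (by positivity)
          _ = Real.exp 1 * (k:ℝ)^k := mul_comm _ _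
    have hfac : (0:ℝ) < k.factorial := by exact_mod_cast k.factorial_pos
    push_cast [Nat.factorial_succ]
    calc ((k:ℝ) + 1)^(k+1) = ((k:ℝ)+1) * ((k:ℝ)+1)^k := by ring
      _ ≤ ((k:ℝ)+1) * (Real.exp 1 * (k:ℝ)^k) := by
          apply mul_le_mul_of_nonneg_left h1 (by positivity)
      _ ≤ ((k:ℝ)+1) * (Real.exp 1 * (Real.exp k * k.factorial)) := by
          apply mul_le_mul_of_nonneg_left _ (by positivity)
          exact mul_le_mul_of_nonneg_left ih (Real.exp_pos 1).le
      _ = Real.exp ((k:ℝ)+1) * (((k:ℝ)+1) * (k.factorial:ℝ)) := by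
          rw [Real.exp_add]; ring

lemma log_factorial_le (k : ℕ) : Real.log k.factorial ≤ k * Real.log k := by
  rcases Nat.eq_zero_or_pos k with hk | hk
  · subst hk; simp
  have h : (k.factorial : ℝ) ≤ (k:ℝ)^k := by exact_mod_cast Nat.factorial_le_pow k
  calc Real.log k.factorial ≤ Real.log ((k:ℝ)^k) := by
        apply Real.log_le_log (by exact_mod_cast k.factorial_pos) h
    _ = k * Real.log k := by rw [Real.log_pow]

lemma log_factorial_ge (k : ℕ) (hk : 1 ≤ k) :
    (k:ℝ) * Real.log k - k ≤ Real.log k.factorial := by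
  have hk0 : (0:ℝ) < k := by exact_mod_cast hk
  have h := pow_le_exp_mul_factorial k
  have hfac : (0:ℝ) < k.factorial := by exact_mod_cast k.factorial_pos
  have := Real.log_le_log (by positivity) h
  rw [Real.log_pow, Real.log_mul (Real.exp_pos _).ne' hfac.ne', Real.log_exp] at this
  linarith

lemma tendsto_log_factorial :
    Tendsto (fun k : ℕ => Real.log k.factorial / ((k:ℝ) * Real.log k)) atTop (nhds 1) := by
  have hlow : Tendsto (fun k : ℕ => 1 - 1 / Real.log k) atTop (nhds 1) := by
    have h0 : Tendsto (fun k : ℕ => 1 / Real.log k) atTop (nhds 0) := by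
      simpa [one_div, Pi.inv_def, Function.comp_def] using
        (Real.tendsto_log_atTop.comp tendsto_natCast_atTop_atTop).inv_tendsto_atTop
    simpa using (tendsto_const_nhds (x := (1:ℝ))).sub h0
  apply tendsto_of_tendsto_of_tendsto_of_le_of_le' hlow tendsto_const_nhds
  · filter_upwards [eventually_ge_atTop 3] with k hk
    have hk0 : (0:ℝ) < k := by positivity
    have hlogk : (0:ℝ) < Real.log k := Real.log_pos (by exact_mod_cast (by omega : 1 < k))
    have h := log_factorial_ge k (by omega)
    rw [le_div_iff₀ (by positivity)]
    have he : (1 - 1/Real.log k) * ((k:ℝ) * Real.log k) = (k:ℝ) * Real.log k - k := by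
      field_simp
    rw [he]; exact h
  · filter_upwards [eventually_ge_atTop 3] with k hk
    have hk0 : (0:ℝ) < k := by exact_mod_cast (by omega : 0 < k)
    have hlogk : (0:ℝ) < Real.log k := Real.log_pos (by exact_mod_cast (by omega : 1 < k))
    exact div_le_one_of_le₀ (log_factorial_le k) (by positivity)

lemma risingFac_pos {a : ℝ} (ha : 0 < a) (k : ℕ) : 0 < risingFac a k :=
  Finset.prod_pos (fun j _ => by positivity)

lemma factorial_le_risingFac {a : ℝ} (ha : 1 ≤ a) (k : ℕ) :
    (k.factorial : ℝ) ≤ risingFac a k := by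
  have : (k.factorial : ℝ) = ∏ j ∈ Finset.range k, ((j:ℝ) + 1) := by
    rw [← Finset.prod_range_add_one_eq_factorial]; push_cast
    exact Finset.prod_congr rfl (fun j _ => by ring)
  rw [this, risingFac]
  apply Finset.prod_le_prod (fun j _ => by positivity) (fun j _ => by linarith)

lemma risingFac_le {a : ℝ} (ha : 1 ≤ a) (k : ℕ) :
    risingFac a k ≤ a^k * k.factorial := by
  have hfac : (k.factorial : ℝ) = ∏ j ∈ Finset.range k, ((j:ℝ) + 1) := by
    rw [← Finset.prod_range_add_one_eq_factorial]; push_cast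
    exact Finset.prod_congr rfl (fun j _ => by ring)
  have hpow : a ^ k * ∏ j ∈ Finset.range k, ((j:ℝ) + 1)
      = ∏ j ∈ Finset.range k, (a * ((j:ℝ) + 1)) := by
    rw [Finset.prod_mul_distrib, Finset.prod_const, Finset.card_range]
  rw [hfac, risingFac, hpow]
  apply Finset.prod_le_prod (fun j _ => by positivity)
  intro j _
  have : (0:ℝ) ≤ (j:ℝ) := Nat.cast_nonneg j
  nlinarith

lemma tendsto_log_risingFac {a : ℝ} (ha : 1 ≤ a) :
    Tendsto (fun k : ℕ => Real.log (risingFac a k) / ((k:ℝ) * Real.log k))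
      atTop (nhds 1) := by
  have ha0 : (0:ℝ) < a := by linarith
  have h0 : Tendsto (fun k : ℕ => Real.log a / Real.log k) atTop (nhds 0) := by
    have := (Real.tendsto_log_atTop.comp tendsto_natCast_atTop_atTop).inv_tendsto_atTop
    simpa [div_eq_mul_inv] using this.const_mul (Real.log a)
  have hup : Tendsto (fun k : ℕ =>
      Real.log k.factorial / ((k:ℝ) * Real.log k) + Real.log a / Real.log k)
      atTop (nhds 1) := by
    simpa using tendsto_log_factorial.add h0
  apply tendsto_of_tendsto_of_tendsto_of_le_of_le' tendsto_log_factorial hup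
  · filter_upwards [eventually_ge_atTop 2] with k hk
    have hlogk : (0:ℝ) < Real.log k :=
      Real.log_pos (by exact_mod_cast (by omega : 1 < k))
    have hk0 : (0:ℝ) < k := by exact_mod_cast (by omega : 0 < k)
    apply div_le_div_of_nonneg_right ?_ (by positivity) |>.trans_eq rfl
    exact Real.log_le_log (by exact_mod_cast k.factorial_pos) (factorial_le_risingFac ha k)
  · filter_upwards [eventually_ge_atTop 2] with k hk
    have hlogk : (0:ℝ) < Real.log k :=
      Real.log_pos (by exact_mod_cast (by omega : 1 < k))
    have hk0 : (0:ℝ) < k := by exact_mod_cast (by omega : 0 < k)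
    have hfac : (0:ℝ) < k.factorial := by exact_mod_cast k.factorial_pos
    have h1 : Real.log (risingFac a k) ≤ (k:ℝ) * Real.log a + Real.log k.factorial := by
      have := Real.log_le_log (risingFac_pos ha0 k) (risingFac_le ha k)
      rwa [Real.log_mul (by positivity) hfac.ne', Real.log_pow] at this
    rw [div_add_div _ _ (by positivity) hlogk.ne', div_le_div_iff₀ (by positivity) (by positivity)]
    have hexp : (Real.log k.factorial * Real.log k + (k:ℝ) * Real.log k * Real.log a)
        = ((k:ℝ) * Real.log a + Real.log k.factorial) * Real.log k := by ring
    calc Real.log (risingFac a k) * ((k:ℝ) * Real.log k * Real.log k)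
        ≤ (((k:ℝ) * Real.log a + Real.log k.factorial) * Real.log k) * ((k:ℝ) * Real.log k) := by
          rw [← hexp]
          nlinarith [mul_le_mul_of_nonneg_right h1 (by positivity : (0:ℝ) ≤ (k:ℝ) * Real.log k * Real.log k)]
      _ = (Real.log k.factorial * Real.log k + ↑k * Real.log ↑k * Real.log a) * (↑k * Real.log ↑k) := by
          rw [hexp]

/-- For integers `m ≥ 0`, `n ≥ 1`, integers `l_j ≥ 2` and reals `ν_r ≥ 0`, with
`a_k = [∏_j (l_j)_k] / [(k!)^{m+n} ∏_r (ν_r+1)_k]`, one has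
`lim_{k→∞} (-log a_k)/(k log k) = 2n`; consequently the order
`ρ(f) = limsup_{k→∞} (k log k)/(-log a_k)` of `f(z) = Σ a_k z^k` equals `1/(2n)`. -/
theorem stmt_19 (m n : ℕ) (hn : 1 ≤ n)
    (l : Fin m → ℕ) (hl : ∀ j, 2 ≤ l j)
    (ν : Fin n → ℝ) (hν : ∀ r, 0 ≤ ν r)
    (a : ℕ → ℝ)
    (ha : ∀ k : ℕ, a k = (∏ j, risingFac (l j) k) /
      ((k.factorial : ℝ) ^ (m + n) * ∏ r, risingFac (ν r + 1) k)) :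
    Filter.Tendsto (fun k : ℕ => (-Real.log (a k)) / ((k : ℝ) * Real.log k))
      Filter.atTop (nhds (2 * (n : ℝ))) ∧
    Filter.limsup (fun k : ℕ => ((k : ℝ) * Real.log k) / (-Real.log (a k)))
      Filter.atTop = 1 / (2 * (n : ℝ)) := by
  have hlpos : ∀ j, (0:ℝ) < (l j : ℝ) := fun j => by
    have := hl j; positivity
  have hl1 : ∀ j, (1:ℝ) ≤ (l j : ℝ) := fun j => by
    have := hl j; exact_mod_cast (by omega : 1 ≤ l j)
  have hν1 : ∀ r, (1:ℝ) ≤ ν r + 1 := fun r => by linarith [hν r]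
  -- eventual equality of the normalized log with a sum of terms
  have key : ∀ᶠ k in atTop, (-Real.log (a k)) / ((k : ℝ) * Real.log k) =
      ((m:ℝ) + n) * (Real.log k.factorial / ((k:ℝ) * Real.log k))
      + ∑ r, Real.log (risingFac (ν r + 1) k) / ((k:ℝ) * Real.log k)
      - ∑ j, Real.log (risingFac ((l j : ℝ)) k) / ((k:ℝ) * Real.log k) := by
    filter_upwards [eventually_ge_atTop 2] with k hk
    have hfac : (0:ℝ) < (k.factorial : ℝ) := by exact_mod_cast k.factorial_pos
    have hN : ∀ j : Fin m, risingFac ((l j : ℝ)) k ≠ 0 :=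
      fun j => (risingFac_pos (hlpos j) k).ne'
    have hD : ∀ r : Fin n, risingFac (ν r + 1) k ≠ 0 :=
      fun r => (risingFac_pos (by linarith [hν r] : (0:ℝ) < ν r + 1) k).ne'
    have hNpos : (0:ℝ) < ∏ j, risingFac ((l j : ℝ)) k :=
      Finset.prod_pos (fun j _ => risingFac_pos (hlpos j) k)
    have hDpos : (0:ℝ) < (k.factorial : ℝ) ^ (m + n) * ∏ r, risingFac (ν r + 1) k := by
      apply mul_pos (by positivity)
      exact Finset.prod_pos (fun r _ => risingFac_pos (by linarith [hν r]) k)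
    rw [ha k, Real.log_div hNpos.ne' hDpos.ne',
      Real.log_mul (by positivity) (Finset.prod_pos (fun r _ =>
        risingFac_pos (by linarith [hν r]) k)).ne',
      Real.log_pow, Real.log_prod (fun j _ => hN j),
      Real.log_prod (fun r _ => hD r)]
    rw [neg_sub, sub_div, add_div, Finset.sum_div, Finset.sum_div]
    push_cast
    ring
  have T1 := tendsto_log_factorial.const_mul ((m:ℝ) + n)
  have T2 : Tendsto (fun k : ℕ => ∑ r, Real.log (risingFac (ν r + 1) k)
      / ((k:ℝ) * Real.log k)) atTop (nhds n) := by
    have := tendsto_finset_sum (Finset.univ : Finset (Fin n))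
      (fun r _ => tendsto_log_risingFac (hν1 r))
    simpa using this
  have T3 : Tendsto (fun k : ℕ => ∑ j, Real.log (risingFac ((l j : ℝ)) k)
      / ((k:ℝ) * Real.log k)) atTop (nhds m) := by
    have := tendsto_finset_sum (Finset.univ : Finset (Fin m))
      (fun j _ => tendsto_log_risingFac (hl1 j))
    simpa using this
  have hT : Tendsto (fun k : ℕ => (-Real.log (a k)) / ((k : ℝ) * Real.log k))
      atTop (nhds (2 * (n:ℝ))) := by
    have := (T1.add T2).sub T3
    rw [show ((m:ℝ) + n) * 1 + (n:ℝ) - (m:ℝ) = 2 * n by ring] at this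
    exact this.congr' (by filter_upwards [key] with k hk; rw [hk])
  refine ⟨hT, ?_⟩
  have h2n : (2 * (n:ℝ)) ≠ 0 := by
    have : (1:ℝ) ≤ n := by exact_mod_cast hn
    positivity
  have hinv : Tendsto (fun k : ℕ => ((k : ℝ) * Real.log k) / (-Real.log (a k)))
      atTop (nhds (1 / (2 * (n:ℝ)))) := by
    have := hT.inv₀ h2n
    rw [← one_div] at this
    refine this.congr (fun k => ?_)
    rw [inv_div]
  exact hinv.limsup_eq
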